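/- Let N ≥ 2, d ≥ 1, τ > 0, and let x_i, v_i : [−τ,∞) → ℝ^d (i = 1,…,N) be continuous functions, continuously differentiable on (0,∞), satisfying for t > 0 the Cucker-Smale system with self-delay ẋ_i(t) = v_i(t) and v̇_i(t) = Σ_{j=1}^N ψ_ij(t−τ)(v_j(t−τ) − v_i(t−τ)), with weights ψ_ij(t) := ψ(|x_j(t) − x_i(t)|)/N for a continuous ψ : [0,∞) → [0,1]. Assume each initial velocity v_i is constant on the interval [−τ,0], and that there exists C ∈ (0,1) such that Ψ(d_x^0 + d_v^0/C) − C ≥ 4τ e^{Cτ}(e^{Cτ} − 1)/(Cτ). Then sup_{t≥0} d_x(t) < ∞, lim_{t→∞} d_v(t) = 0, and the velocity diameter decays exponentially with rate C: d_v(t) ≤ d_v^0 e^{−Ct} for all t ≥ 0. -/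

import Mathlib

open Real Set Filter

/-- The diameter at time `t` of the configuration given by the trajectories `y`. -/
noncomputable def diamAt {N d : ℕ} (y : Fin N → ℝ → EuclideanSpace ℝ (Fin d)) (t : ℝ) : ℝ :=
  ⨆ p : Fin N × Fin N, ‖y p.1 t - y p.2 t‖

/-- The nonincreasing rearrangement `Ψ(u) = min_{s ∈ [0,u]} ψ(s)` of the influence function. -/
noncomputable def Psi (ψ : ℝ → ℝ) (u : ℝ) : ℝ := sInf (ψ '' Set.Icc 0 u)

namespace CSAux

variable {N d : ℕ}

lemma norm_le_diamAt (y : Fin N → ℝ → EuclideanSpace ℝ (Fin d)) (t : ℝ) (i j : Fin N) :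
    ‖y i t - y j t‖ ≤ diamAt y t :=
  le_ciSup (Set.finite_range fun p : Fin N × Fin N => ‖y p.1 t - y p.2 t‖).bddAbove
    ((i, j) : Fin N × Fin N)

lemma diamAt_le [NeZero N] (y : Fin N → ℝ → EuclideanSpace ℝ (Fin d)) (t : ℝ) {c : ℝ}
    (h : ∀ i j : Fin N, ‖y i t - y j t‖ ≤ c) : diamAt y t ≤ c :=
  ciSup_le fun p => h p.1 p.2

lemma diamAt_nonneg [NeZero N] (y : Fin N → ℝ → EuclideanSpace ℝ (Fin d)) (t : ℝ) :
    0 ≤ diamAt y t := by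
  have := norm_le_diamAt y t 0 0
  simpa using this

lemma exists_diamAt [NeZero N] (y : Fin N → ℝ → EuclideanSpace ℝ (Fin d)) (t : ℝ) :
    ∃ p : Fin N × Fin N, diamAt y t = ‖y p.1 t - y p.2 t‖ := by
  obtain ⟨p, hp⟩ := Finite.exists_max (fun p : Fin N × Fin N => ‖y p.1 t - y p.2 t‖)
  exact ⟨p, le_antisymm (ciSup_le hp) (norm_le_diamAt y t p.1 p.2)⟩

lemma continuousOn_diamAt [NeZero N] (y : Fin N → ℝ → EuclideanSpace ℝ (Fin d)) {s : Set ℝ}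
    (hy : ∀ i, ContinuousOn (y i) s) : ContinuousOn (diamAt y) s := by
  have hrw : diamAt y = fun t => Finset.univ.sup' Finset.univ_nonempty
      (fun p : Fin N × Fin N => ‖y p.1 t - y p.2 t‖) := by
    funext t
    rw [Finset.sup'_univ_eq_ciSup]
    rfl
  rw [hrw]
  exact ContinuousOn.finset_sup'_apply _ fun p _ => ((hy p.1).sub (hy p.2)).norm

lemma hasDerivAt_norm_comp {E : Type*} [NormedAddCommGroup E] [InnerProductSpace ℝ E]
    {w : ℝ → E} {w' : E} {t : ℝ} (hw : HasDerivAt w w' t) (h0 : w t ≠ 0) :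
    HasDerivAt (fun s => ‖w s‖) ((inner ℝ w' (w t) : ℝ) / ‖w t‖) t := by
  have h1 : HasDerivAt (fun s => (inner ℝ (w s) (w s) : ℝ))
      ((inner ℝ (w t) w' : ℝ) + (inner ℝ w' (w t) : ℝ)) t := hw.inner ℝ hw
  have h2 : (inner ℝ (w t) (w t) : ℝ) ≠ 0 := by
    rw [real_inner_self_eq_norm_mul_norm]
    have : 0 < ‖w t‖ := norm_pos_iff.mpr h0
    positivity
  have h3 := (Real.hasDerivAt_sqrt h2).comp t h1
  have h4 : (fun s => Real.sqrt ((inner ℝ (w s) (w s) : ℝ))) = fun s => ‖w s‖ := by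
    funext s
    rw [real_inner_self_eq_norm_mul_norm, Real.sqrt_mul_self (norm_nonneg _)]
  have h3' : HasDerivAt (fun s => ‖w s‖)
      (1 / (2 * Real.sqrt ((inner ℝ (w t) (w t) : ℝ))) *
        ((inner ℝ (w t) w' : ℝ) + (inner ℝ w' (w t) : ℝ))) t := by
    rw [← h4]; exact h3
  convert h3' using 1
  rw [real_inner_self_eq_norm_mul_norm, real_inner_comm (w t) w']
  rw [Real.sqrt_mul_self (norm_nonneg _)]
  field_simp
  ring

lemma ftc_aux {E : Type*} [NormedAddCommGroup E] [NormedSpace ℝ E] [CompleteSpace E]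
    {f f' : ℝ → E} {a b : ℝ} (hab : a ≤ b)
    (hc : ContinuousOn f (Icc a b))
    (hd : ∀ s ∈ Ioo a b, HasDerivAt f (f' s) s)
    (hi : ContinuousOn f' (Icc a b)) :
    f b - f a = ∫ s in a..b, f' s := by
  rw [intervalIntegral.integral_eq_sub_of_hasDeriv_right_of_le hab hc
      (fun s hs => (hd s hs).hasDerivWithinAt)
      (hi.intervalIntegrable_of_Icc hab)]

/-- `∫_a^b M e^{-Cs} ds` computation. -/
lemma integral_exp_neg (M C a b : ℝ) (hC : C ≠ 0) :
    ∫ s in a..b, M * exp (-C * s) = M / C * (exp (-C * a) - exp (-C * b)) := by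
  have h : ∀ s ∈ Icc (min a b) (max a b), HasDerivAt (fun u => -(M / C) * exp (-C * u))
      (M * exp (-C * s)) s := by
    intro s _
    have : HasDerivAt (fun u => -C * u) (-C) s := by
      simpa using (hasDerivAt_id s).const_mul (-C)
    have := (this.exp).const_mul (-(M / C))
    refine this.congr_deriv ?_
    linear_combination (exp (-C * s)) * (div_mul_cancel₀ M hC)
  rw [intervalIntegral.integral_eq_sub_of_hasDerivAt
      (fun s hs => h s (by rw [uIcc] at hs; exact hs))
      ((Continuous.intervalIntegrable (by continuity) a b))]
  ring

lemma mul_le_aux {a ep p psn invn ed : ℝ} (h1 : psn ≤ a) (h2 : a ≤ invn) (h0 : 0 ≤ a)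
    (hple : p ≤ 0) (herr : |ep - p| ≤ ed) (hinv : 0 ≤ invn) :
    a * ep ≤ psn * p + invn * ed := by
  have s0 : a * ep = a * p + a * (ep - p) := by ring
  have s1 : a * p ≤ psn * p := mul_le_mul_of_nonpos_right h1 hple
  have s2 : a * (ep - p) ≤ a * |ep - p| := mul_le_mul_of_nonneg_left (le_abs_self _) h0
  have s3 : a * |ep - p| ≤ invn * ed := mul_le_mul h2 herr (abs_nonneg _) hinv
  linarith

lemma mul_ge_aux {b eq q psn invn ed : ℝ} (h1 : psn ≤ b) (h2 : b ≤ invn) (h0 : 0 ≤ b)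
    (hqge : 0 ≤ q) (herr : |eq - q| ≤ ed) (hinv : 0 ≤ invn) :
    psn * q - invn * ed ≤ b * eq := by
  have s0 : b * eq = b * q + b * (eq - q) := by ring
  have s1 : psn * q ≤ b * q := mul_le_mul_of_nonneg_right h1 hqge
  have s2' : b * -(eq - q) ≤ b * |eq - q| := mul_le_mul_of_nonneg_left (neg_le_abs _) h0
  have s2 : -(b * (eq - q)) = b * -(eq - q) := by ring
  have s3 : b * |eq - q| ≤ invn * ed := mul_le_mul h2 herr (abs_nonneg _) hinv
  linarith

end CSAux

open CSAux in
set_option maxHeartbeats 4000000 in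
theorem flocking_CS_selfdelay_classical_weights_constant_initial_velocity
    {N d : ℕ} (hN : 2 ≤ N) (hd : 1 ≤ d) {τ : ℝ} (hτ : 0 < τ)
    (x v : Fin N → ℝ → EuclideanSpace ℝ (Fin d))
    (hxc : ∀ i, ContinuousOn (x i) (Ici (-τ)))
    (hvc : ∀ i, ContinuousOn (v i) (Ici (-τ)))
    (ψ : ℝ → ℝ) (hψc : Continuous ψ) (hψ : ∀ s, 0 ≤ s → ψ s ∈ Icc (0 : ℝ) 1)
    (hx' : ∀ i, ∀ t, 0 < t → HasDerivAt (x i) (v i t) t)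
    (hv' : ∀ i, ∀ t, 0 < t → HasDerivAt (v i)
      (∑ j, (ψ ‖x j (t - τ) - x i (t - τ)‖ / (N : ℝ)) • (v j (t - τ) - v i (t - τ))) t)
    (hconst : ∀ i, ∀ t ∈ Icc (-τ) (0 : ℝ), v i t = v i 0)
    (dx0 dv0 : ℝ)
    (hdx0 : dx0 = sSup (diamAt x '' Icc (-τ) 0))
    (hdv0 : dv0 = sSup (diamAt v '' Icc (-τ) 0))
    (C : ℝ) (hC : C ∈ Ioo (0 : ℝ) 1)
    (hcond : Psi ψ (dx0 + dv0 / C) - C ≥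
      4 * τ * exp (C * τ) * (exp (C * τ) - 1) / (C * τ)) :
    BddAbove (diamAt x '' Ici 0) ∧
    Tendsto (diamAt v) atTop (nhds 0) ∧
    ∀ t, 0 ≤ t → diamAt v t ≤ dv0 * exp (-C * t) := by
  haveI : NeZero N := ⟨by omega⟩
  obtain ⟨hC0, hC1⟩ := hC
  have hNpos : (0:ℝ) < N := by positivity
  have hexp1 : 1 < exp (C * τ) := by
    rw [← Real.exp_zero]
    exact Real.exp_lt_exp.mpr (by positivity)
  set θ : ℝ := 4 * exp (C * τ) * (exp (C * τ) - 1) / C with hθdef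
  have hθpos : 0 < θ := by
    apply div_pos _ hC0
    have : 0 < exp (C * τ) := Real.exp_pos _
    nlinarith
  have hcond' : C + θ ≤ Psi ψ (dx0 + dv0 / C) := by
    have heq : 4 * τ * exp (C * τ) * (exp (C * τ) - 1) / (C * τ) = θ := by
      rw [hθdef]
      field_simp
    rw [heq] at hcond
    linarith
  -- continuity of diameters
  have hDvc : ContinuousOn (diamAt v) (Ici (-τ)) := continuousOn_diamAt v hvc
  have hDxc : ContinuousOn (diamAt x) (Ici (-τ)) := continuousOn_diamAt x hxc
  -- initial bounds
  have hsub : Icc (-τ) (0:ℝ) ⊆ Ici (-τ) := Icc_subset_Ici_self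
  have hmem0 : (0:ℝ) ∈ Icc (-τ) (0:ℝ) := ⟨by linarith, le_refl _⟩
  have hdvge : ∀ t ∈ Icc (-τ) (0:ℝ), diamAt v t ≤ dv0 := by
    intro t ht
    rw [hdv0]
    exact le_csSup (isCompact_Icc.bddAbove_image (hDvc.mono hsub)) ⟨t, ht, rfl⟩
  have hdxge : ∀ t ∈ Icc (-τ) (0:ℝ), diamAt x t ≤ dx0 := by
    intro t ht
    rw [hdx0]
    exact le_csSup (isCompact_Icc.bddAbove_image (hDxc.mono hsub)) ⟨t, ht, rfl⟩
  have hdv0nn : 0 ≤ dv0 := le_trans (diamAt_nonneg v 0) (hdvge 0 hmem0)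
  have hdx0nn : 0 ≤ dx0 := le_trans (diamAt_nonneg x 0) (hdxge 0 hmem0)
  -- frozen initial diameter
  have hfreeze : ∀ u ∈ Icc (-τ) (0:ℝ), ∀ i, v i u = v i 0 := fun u hu i => hconst i u hu
  -- Psi basics
  have hPsiBdd : ∀ u : ℝ, BddBelow (ψ '' Icc 0 u) := by
    intro u
    exact ⟨0, by rintro r ⟨s, hs, rfl⟩; exact (hψ s hs.1).1⟩
  have hPsi_le_psi : ∀ u : ℝ, ∀ s ∈ Icc (0:ℝ) u, Psi ψ u ≤ ψ s := by
    intro u s hs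
    exact csInf_le (hPsiBdd u) ⟨s, hs, rfl⟩
  -- key inequality infrastructure: η and δ
  set R₀ : ℝ := dx0 + dv0 / C with hR₀def
  have hR₀nn : 0 ≤ R₀ := by positivity
  set η : ℝ := θ / (2 * N) with hηdef
  have hηpos : 0 < η := by positivity
  have hPsi_near : ∃ δ > 0, ∀ u, R₀ ≤ u → u < R₀ + δ → Psi ψ R₀ - η ≤ Psi ψ u := by
    have hev : ∀ᶠ s in nhds R₀, ψ R₀ - η < ψ s :=
      Filter.Tendsto.eventually_const_lt (by linarith) hψc.continuousAt
    obtain ⟨δ, hδ0, hball⟩ := Metric.eventually_nhds_iff.mp hev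
    refine ⟨δ, hδ0, fun u hu1 hu2 => ?_⟩
    have h0u : (0:ℝ) ≤ u := le_trans hR₀nn hu1
    refine le_csInf ⟨ψ 0, 0, ⟨le_refl _, h0u⟩, rfl⟩ ?_
    rintro r ⟨s, ⟨hs0, hsu⟩, rfl⟩
    by_cases hs : s ≤ R₀
    · have := hPsi_le_psi R₀ s ⟨hs0, hs⟩
      linarith
    · push_neg at hs
      have hd : dist s R₀ < δ := by
        rw [Real.dist_eq, abs_of_pos (by linarith)]
        linarith
      have h1 := hball hd
      have h2 := hPsi_le_psi R₀ R₀ ⟨hR₀nn, le_refl _⟩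
      linarith
  obtain ⟨δ, hδ0, hδ⟩ := hPsi_near
  -- the position bound machinery (for a generic decaying velocity bound M')
  have posb : ∀ M' : ℝ, 0 ≤ M' → ∀ s : ℝ, 0 ≤ s →
      (∀ u, 0 ≤ u → u ≤ s → diamAt v u ≤ M' * exp (-C * u)) →
      ∀ k i : Fin N, ‖x k s - x i s‖ ≤ dx0 + M' / C := by
    intro M' hM' s hs hbd k i
    have hMC : 0 ≤ M' / C := by positivity
    have hk0 : ‖x k 0 - x i 0‖ ≤ dx0 := le_trans (norm_le_diamAt x 0 k i) (hdxge 0 hmem0)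
    rcases eq_or_lt_of_le hs with h0 | h0
    · rw [← h0]
      linarith
    · have hIcc : Icc (0:ℝ) s ⊆ Ici (-τ) := fun u hu => le_trans (by linarith) hu.1
      have hftc : (x k s - x i s) - (x k 0 - x i 0) = ∫ u in (0:ℝ)..s, (v k u - v i u) :=
        ftc_aux (le_of_lt h0)
          (((hxc k).mono hIcc).sub ((hxc i).mono hIcc))
          (fun u hu => (hx' k u hu.1).sub (hx' i u hu.1))
          (((hvc k).mono hIcc).sub ((hvc i).mono hIcc))
      have hnormint : ‖∫ u in (0:ℝ)..s, (v k u - v i u)‖ ≤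
          |∫ u in (0:ℝ)..s, M' * exp (-C * u)| := by
        apply intervalIntegral.norm_integral_le_abs_of_norm_le
        · rw [uIoc_of_le (le_of_lt h0)]
          refine (MeasureTheory.ae_restrict_iff' measurableSet_Ioc).mpr
            (MeasureTheory.ae_of_all _ ?_)
          intro u hu
          exact le_trans (norm_le_diamAt v u k i) (hbd u (le_of_lt hu.1) hu.2)
        · exact Continuous.intervalIntegrable (by fun_prop) _ _
      have hval : ∫ u in (0:ℝ)..s, M' * exp (-C * u)
          = M' / C * (exp (-C * 0) - exp (-C * s)) := integral_exp_neg M' C 0 s (ne_of_gt hC0)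
      have hint_le : |∫ u in (0:ℝ)..s, M' * exp (-C * u)| ≤ M' / C := by
        rw [hval]
        have he1 : exp (-C * s) ≤ 1 := by
          rw [← Real.exp_zero]
          apply Real.exp_le_exp.mpr
          nlinarith
        have he0 : 0 < exp (-C * s) := Real.exp_pos _
        have hz : exp (-C * 0) = 1 := by rw [mul_zero, Real.exp_zero]
        rw [hz, abs_of_nonneg (by nlinarith)]
        nlinarith
      calc ‖x k s - x i s‖
          = ‖(x k 0 - x i 0) + ((x k s - x i s) - (x k 0 - x i 0))‖ := by
            congr 1
            abel
        _ ≤ ‖x k 0 - x i 0‖ + ‖(x k s - x i s) - (x k 0 - x i 0)‖ := norm_add_le _ _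
        _ ≤ dx0 + M' / C := by
            rw [hftc]
            exact add_le_add hk0 (le_trans hnormint hint_le)
  -- the main bootstrap estimate
  have main : ∀ M : ℝ, dv0 < M →
      C + ((N : ℝ) - 1) / N * θ < Psi ψ (dx0 + M / C) →
      ∀ t, 0 ≤ t → diamAt v t ≤ M * exp (-C * t) := by
    intro M hMgt hPsiM
    set R : ℝ := dx0 + M / C with hRdef
    set Ψm : ℝ := Psi ψ R with hΨmdef
    have hM0 : 0 < M := lt_of_le_of_lt hdv0nn hMgt
    by_contra hcon
    push_neg at hcon
    obtain ⟨T, hT0, hTv⟩ := hcon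
    set A : Set ℝ := {t : ℝ | 0 ≤ t ∧ M * exp (-C * t) < diamAt v t} with hAdef
    have hAne : A.Nonempty := ⟨T, hT0, hTv⟩
    have hAbdd : BddBelow A := ⟨0, fun t ht => ht.1⟩
    set t₀ : ℝ := sInf A with ht₀def
    have ht₀0 : 0 ≤ t₀ := le_csInf hAne fun t ht => ht.1
    have hDvat : ∀ t : ℝ, 0 ≤ t → ContinuousAt (diamAt v) t := fun t ht =>
      hDvc.continuousAt (Ici_mem_nhds (by linarith))
    have hBc : Continuous (fun t : ℝ => M * exp (-C * t)) := by fun_prop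
    have hbelow : ∀ u, 0 ≤ u → u < t₀ → diamAt v u ≤ M * exp (-C * u) := by
      intro u hu hut
      by_contra hc
      push_neg at hc
      exact absurd (csInf_le hAbdd ⟨hu, hc⟩) (not_le.mpr hut)
    have hseq : ∀ n : ℕ, ∃ z ∈ A, z < t₀ + 1/(n+1) := by
      intro n
      apply exists_lt_of_csInf_lt hAne
      have : (0:ℝ) < 1/(n+1) := by positivity
      rw [← ht₀def]
      linarith
    choose sq hsqA hsqlt using hseq
    have hsqge : ∀ n, t₀ ≤ sq n := fun n => csInf_le hAbdd (hsqA n)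
    have halim : Tendsto sq atTop (nhds t₀) := by
      have hup : Tendsto (fun n : ℕ => t₀ + 1/(n+1)) atTop (nhds t₀) := by
        have h0 : Tendsto (fun n : ℕ => 1/((n:ℝ)+1)) atTop (nhds 0) :=
          tendsto_one_div_add_atTop_nhds_zero_nat
        have h1 : Tendsto (fun n : ℕ => t₀ + 1/((n:ℝ)+1)) atTop (nhds (t₀ + 0)) :=
          Tendsto.add tendsto_const_nhds h0
        rw [add_zero] at h1
        exact h1
      exact tendsto_of_tendsto_of_tendsto_of_le_of_le tendsto_const_nhds hup hsqge
        (fun n => le_of_lt (hsqlt n))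
    have hge : M * exp (-C * t₀) ≤ diamAt v t₀ := by
      have h1 : Tendsto (fun n => M * exp (-C * sq n)) atTop (nhds (M * exp (-C * t₀))) :=
        (hBc.tendsto t₀).comp halim
      have h2 : Tendsto (fun n => diamAt v (sq n)) atTop (nhds (diamAt v t₀)) :=
        (hDvat t₀ ht₀0).tendsto.comp halim
      exact le_of_tendsto_of_tendsto' h1 h2 (fun n => le_of_lt (hsqA n).2)
    have ht₀pos : 0 < t₀ := by
      rcases eq_or_lt_of_le ht₀0 with h | h
      · exfalso
        have h1 : diamAt v 0 ≤ dv0 := hdvge 0 hmem0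
        rw [← h] at hge
        simp only [mul_zero, neg_zero, Real.exp_zero, mul_one] at hge
        linarith
      · exact h
    have hle : diamAt v t₀ ≤ M * exp (-C * t₀) := by
      have hev : ∀ᶠ u in nhdsWithin t₀ (Iio t₀), diamAt v u ≤ M * exp (-C * u) := by
        filter_upwards [Ioo_mem_nhdsLT_of_mem (⟨ht₀pos, le_refl t₀⟩ : t₀ ∈ Ioc 0 t₀)]
        intro u hu
        exact hbelow u (le_of_lt hu.1) hu.2
      have h1 : Tendsto (diamAt v) (nhdsWithin t₀ (Iio t₀)) (nhds (diamAt v t₀)) :=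
        (hDvat t₀ ht₀0).tendsto.mono_left nhdsWithin_le_nhds
      have h2 : Tendsto (fun u => M * exp (-C * u)) (nhdsWithin t₀ (Iio t₀))
          (nhds (M * exp (-C * t₀))) := (hBc.tendsto t₀).mono_left nhdsWithin_le_nhds
      exact le_of_tendsto_of_tendsto h1 h2 hev
    have hstar : diamAt v t₀ = M * exp (-C * t₀) := le_antisymm hle hge
    have hsqgt : ∀ n, t₀ < sq n := by
      intro n
      rcases eq_or_lt_of_le (hsqge n) with h | h
      · exfalso
        have := (hsqA n).2
        rw [← h, hstar] at this
        exact lt_irrefl _ this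
      · exact h
    have hDle : ∀ u, -τ ≤ u → u ≤ t₀ → diamAt v u ≤ M * exp (-C * u) := by
      intro u hu hut
      rcases le_or_gt u 0 with h0 | h0
      · have h1 : diamAt v u = diamAt v 0 := by
          unfold diamAt
          exact iSup_congr fun p => by
            rw [hfreeze u ⟨hu, h0⟩ p.1, hfreeze u ⟨hu, h0⟩ p.2]
        have h2 : diamAt v 0 ≤ dv0 := hdvge 0 hmem0
        have h3 : 1 ≤ exp (-C * u) := by
          rw [← Real.exp_zero]
          apply Real.exp_le_exp.mpr
          nlinarith
        rw [h1]
        nlinarith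
      · rcases lt_or_eq_of_le hut with h | h
        · exact hbelow u (le_of_lt h0) h
        · rw [h, hstar]
    have hposR : ∀ s, -τ ≤ s → s < t₀ → ∀ k i : Fin N, ‖x k s - x i s‖ ≤ R := by
      intro s hs hst k i
      rcases le_or_gt s 0 with h0 | h0
      · have h1 := norm_le_diamAt x s k i
        have h2 := hdxge s ⟨hs, h0⟩
        have h3 : 0 ≤ M / C := by positivity
        rw [hRdef]
        linarith
      · have := posb M (le_of_lt hM0) s (le_of_lt h0)
          (fun u hu hus => hDle u (by linarith) (by linarith)) k i
        rw [hRdef]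
        exact this
    -- velocity increment bound at t₀
    have hinc : ∀ b : Fin N, ‖v b t₀ - v b (t₀ - τ)‖ ≤
        M * (exp (C * τ) * (exp (C * τ) - 1) / C) * exp (-C * t₀) := by
      intro b
      set m : ℝ := max (t₀ - τ) 0 with hmdef
      have hm0 : 0 ≤ m := le_max_right _ _
      have hmτ : t₀ - τ ≤ m := le_max_left _ _
      have hmt : m ≤ t₀ := max_le (by linarith) ht₀0
      have hmap : MapsTo (fun s : ℝ => s - τ) (Icc m t₀) (Ici (-τ)) := by
        intro s hs
        simp only [mem_Ici]
        have := hs.1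
        linarith
      have hsubc : ContinuousOn (fun s : ℝ => s - τ) (Icc m t₀) :=
        (continuous_id.sub continuous_const).continuousOn
      have hgc : ContinuousOn (fun s => ∑ j, (ψ ‖x j (s - τ) - x b (s - τ)‖ / (N : ℝ)) •
          (v j (s - τ) - v b (s - τ))) (Icc m t₀) := by
        apply continuousOn_finset_sum
        intro j _
        refine ContinuousOn.smul (f := fun a => ψ ‖x j (a - τ) - x b (a - τ)‖ / (N : ℝ))
          (g := fun a => v j (a - τ) - v b (a - τ)) ?_ ?_
        · apply ContinuousOn.div_const
          apply hψc.comp_continuousOn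
          exact (((hxc j).comp hsubc hmap).sub ((hxc b).comp hsubc hmap)).norm
        · exact ((hvc j).comp hsubc hmap).sub ((hvc b).comp hsubc hmap)
      have hIccsub : Icc m t₀ ⊆ Ici (-τ) := fun s hs => le_trans (by linarith) hs.1
      have hftc : v b t₀ - v b m = ∫ s in m..t₀,
          ∑ j, (ψ ‖x j (s - τ) - x b (s - τ)‖ / (N : ℝ)) • (v j (s - τ) - v b (s - τ)) :=
        ftc_aux hmt ((hvc b).mono hIccsub)
          (fun s hs => hv' b s (lt_of_le_of_lt hm0 hs.1)) hgc
      have hvm : v b m = v b (t₀ - τ) := by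
        rcases le_or_gt 0 (t₀ - τ) with h | h
        · rw [hmdef, max_eq_left h]
        · have hmeq : m = 0 := max_eq_right (le_of_lt h)
          rw [hmeq, hconst b (t₀ - τ) ⟨by linarith, by linarith⟩]
      have hbound : ∀ s ∈ Ioc m t₀,
          ‖∑ j, (ψ ‖x j (s - τ) - x b (s - τ)‖ / (N : ℝ)) • (v j (s - τ) - v b (s - τ))‖ ≤
            (M * exp (C * τ)) * exp (-C * s) := by
        intro s hs
        have hsτ1 : -τ ≤ s - τ := by
          have := hs.1
          linarith
        have hsτ2 : s - τ ≤ t₀ := by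
          have := hs.2
          linarith
        have hD := hDle (s - τ) hsτ1 hsτ2
        have hDnn : (0:ℝ) ≤ diamAt v (s - τ) := diamAt_nonneg v _
        calc ‖∑ j, (ψ ‖x j (s - τ) - x b (s - τ)‖ / (N : ℝ)) • (v j (s - τ) - v b (s - τ))‖
            ≤ ∑ j, ‖(ψ ‖x j (s - τ) - x b (s - τ)‖ / (N : ℝ)) • (v j (s - τ) - v b (s - τ))‖ :=
              norm_sum_le _ _
          _ ≤ ∑ _j : Fin N, (1 / (N : ℝ)) * diamAt v (s - τ) := by
              apply Finset.sum_le_sum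
              intro j _
              rw [norm_smul]
              have hψj := hψ (‖x j (s - τ) - x b (s - τ)‖) (norm_nonneg _)
              have h1 : |ψ ‖x j (s - τ) - x b (s - τ)‖ / (N : ℝ)| ≤ 1 / (N : ℝ) := by
                rw [abs_of_nonneg (div_nonneg hψj.1 (le_of_lt hNpos))]
                gcongr
                exact hψj.2
              have h2 : ‖v j (s - τ) - v b (s - τ)‖ ≤ diamAt v (s - τ) := norm_le_diamAt v _ j b
              have h3 : (0:ℝ) ≤ 1 / (N : ℝ) := by positivity
              exact mul_le_mul h1 h2 (norm_nonneg _) h3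
          _ = diamAt v (s - τ) := by
              rw [Finset.sum_const, Finset.card_univ, Fintype.card_fin, nsmul_eq_mul]
              field_simp
          _ ≤ M * exp (-C * (s - τ)) := hD
          _ = (M * exp (C * τ)) * exp (-C * s) := by
              rw [mul_assoc, ← Real.exp_add]
              congr 2
              ring
      have hnormint : ‖∫ s in m..t₀,
          ∑ j, (ψ ‖x j (s - τ) - x b (s - τ)‖ / (N : ℝ)) • (v j (s - τ) - v b (s - τ))‖ ≤
          |∫ s in m..t₀, (M * exp (C * τ)) * exp (-C * s)| := by
        apply intervalIntegral.norm_integral_le_abs_of_norm_le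
        · rw [uIoc_of_le hmt]
          exact (MeasureTheory.ae_restrict_iff' measurableSet_Ioc).mpr
            (MeasureTheory.ae_of_all _ hbound)
        · exact Continuous.intervalIntegrable (by fun_prop) _ _
      have hval : ∫ s in m..t₀, (M * exp (C * τ)) * exp (-C * s)
          = (M * exp (C * τ)) / C * (exp (-C * m) - exp (-C * t₀)) :=
        integral_exp_neg _ C m t₀ (ne_of_gt hC0)
      have hfin : (M * exp (C * τ)) / C * (exp (-C * m) - exp (-C * t₀)) ≤
          M * (exp (C * τ) * (exp (C * τ) - 1) / C) * exp (-C * t₀) := by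
        have h1 : exp (-C * m) ≤ exp (-C * (t₀ - τ)) := Real.exp_le_exp.mpr (by nlinarith)
        have h2 : exp (-C * (t₀ - τ)) = exp (C * τ) * exp (-C * t₀) := by
          rw [← Real.exp_add]
          congr 1
          ring
        rw [h2] at h1
        have h3 : (0:ℝ) < exp (C * τ) := Real.exp_pos _
        have hrw : M * (exp (C * τ) * (exp (C * τ) - 1) / C) * exp (-C * t₀)
            = (M * exp (C * τ)) / C * (exp (C * τ) * exp (-C * t₀) - exp (-C * t₀)) := by
          ring
        rw [hrw]
        exact mul_le_mul_of_nonneg_left (by linarith) (by positivity)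
      have habs : |∫ s in m..t₀, (M * exp (C * τ)) * exp (-C * s)|
          = (M * exp (C * τ)) / C * (exp (-C * m) - exp (-C * t₀)) := by
        rw [hval, abs_of_nonneg]
        have h1 : exp (-C * t₀) ≤ exp (-C * m) := Real.exp_le_exp.mpr (by nlinarith)
        have h3 : (0:ℝ) < exp (C * τ) := Real.exp_pos _
        have : (0:ℝ) ≤ (M * exp (C * τ)) / C := by positivity
        nlinarith
      calc ‖v b t₀ - v b (t₀ - τ)‖ = ‖v b t₀ - v b m‖ := by rw [hvm]
        _ ≤ |∫ s in m..t₀, (M * exp (C * τ)) * exp (-C * s)| := by rw [hftc] at *; exact hnormint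
        _ ≤ M * (exp (C * τ) * (exp (C * τ) - 1) / C) * exp (-C * t₀) := by rw [habs]; exact hfin
    -- the contact-point contradiction
    set Dstar : ℝ := M * exp (-C * t₀) with hDstardef
    have hDstar0 : 0 < Dstar := by positivity
    set Ebar : ℝ := M * (exp (C * τ) * (exp (C * τ) - 1) / C) * exp (-C * t₀) with hEbardef
    have hEbar0 : 0 ≤ Ebar := by
      rw [hEbardef]
      have h1 : (0:ℝ) ≤ exp (C * τ) - 1 := by linarith
      have h2 : (0:ℝ) < exp (C * τ) := Real.exp_pos _
      have h3 : (0:ℝ) < exp (-C * t₀) := Real.exp_pos _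
      positivity
    have hEθ : 4 * Ebar = θ * Dstar := by
      rw [hEbardef, hθdef, hDstardef]
      ring
    set L : ℝ := -Ψm * Dstar + ((N : ℝ) - 1) / N * θ * Dstar with hLdef
    set B' : ℝ := -C * Dstar with hB'def
    have hLB : L < B' := by
      rw [hLdef, hB'def]
      nlinarith [hDstar0, hPsiM]
    set r : ℝ := (L + B') / 2 with hrdef
    clear_value Dstar Ebar L B' r
    have hrL : L < r := by
      rw [hrdef]
      linarith
    have hrB : r < B' := by
      rw [hrdef]
      linarith
    have claim : ∀ p : Fin N × Fin N, ∀ᶠ z in nhdsWithin t₀ (Ioi t₀),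
        (‖v p.1 z - v p.2 z‖ - Dstar) / (z - t₀) < r := by
      intro p
      by_cases hp : ‖v p.1 t₀ - v p.2 t₀‖ = Dstar
      · -- active pair
        have hw0 : v p.1 t₀ - v p.2 t₀ ≠ 0 := by
          intro h
          rw [h, norm_zero] at hp
          linarith
        have hw' : HasDerivAt (fun s => v p.1 s - v p.2 s)
            ((∑ k, (ψ ‖x k (t₀ - τ) - x p.1 (t₀ - τ)‖ / (N : ℝ)) •
                (v k (t₀ - τ) - v p.1 (t₀ - τ))) -
             (∑ k, (ψ ‖x k (t₀ - τ) - x p.2 (t₀ - τ)‖ / (N : ℝ)) •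
                (v k (t₀ - τ) - v p.2 (t₀ - τ)))) t₀ :=
          (hv' p.1 t₀ ht₀pos).sub (hv' p.2 t₀ ht₀pos)
        have hnorm' := hasDerivAt_norm_comp hw' hw0
        have hLp : (inner ℝ
            ((∑ k, (ψ ‖x k (t₀ - τ) - x p.1 (t₀ - τ)‖ / (N : ℝ)) •
                (v k (t₀ - τ) - v p.1 (t₀ - τ))) -
             (∑ k, (ψ ‖x k (t₀ - τ) - x p.2 (t₀ - τ)‖ / (N : ℝ)) •
                (v k (t₀ - τ) - v p.2 (t₀ - τ))))
            (v p.1 t₀ - v p.2 t₀) : ℝ) / ‖v p.1 t₀ - v p.2 t₀‖ ≤ L := by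
          have ht'1 : -τ ≤ t₀ - τ := by linarith
          have ht'2 : t₀ - τ < t₀ := by linarith
          have hcoefL : ∀ a k : Fin N, Ψm / N ≤ ψ ‖x k (t₀ - τ) - x a (t₀ - τ)‖ / N := by
            intro a k
            have harg := hposR (t₀ - τ) ht'1 ht'2 k a
            have h1 : Ψm ≤ ψ ‖x k (t₀ - τ) - x a (t₀ - τ)‖ := by
              rw [hΨmdef]
              exact hPsi_le_psi R _ ⟨norm_nonneg _, harg⟩
            gcongr
          have hcoefU : ∀ a k : Fin N, ψ ‖x k (t₀ - τ) - x a (t₀ - τ)‖ / N ≤ 1 / N := by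
            intro a k
            have h2 := hψ _ (norm_nonneg (x k (t₀ - τ) - x a (t₀ - τ)))
            gcongr
            exact h2.2
          have hcoef0 : ∀ a k : Fin N, 0 ≤ ψ ‖x k (t₀ - τ) - x a (t₀ - τ)‖ / N := by
            intro a k
            have h2 := hψ _ (norm_nonneg (x k (t₀ - τ) - x a (t₀ - τ)))
            exact div_nonneg h2.1 (le_of_lt hNpos)
          have hEk : ∀ k : Fin N, ‖v k (t₀ - τ) - v k t₀‖ ≤ Ebar := by
            intro k
            rw [norm_sub_rev]
            exact hinc k
          have hWW : (inner ℝ (v p.1 t₀ - v p.2 t₀) (v p.1 t₀ - v p.2 t₀) : ℝ)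
              = Dstar * Dstar := by
            rw [real_inner_self_eq_norm_mul_norm, hp]
          have hPk : ∀ k : Fin N,
              (inner ℝ (v k t₀ - v p.1 t₀) (v p.1 t₀ - v p.2 t₀) : ℝ) ≤ 0 := by
            intro k
            have hsplit : v k t₀ - v p.1 t₀
                = (v k t₀ - v p.2 t₀) - (v p.1 t₀ - v p.2 t₀) := by abel
            rw [hsplit, inner_sub_left, hWW]
            have h2 : (inner ℝ (v k t₀ - v p.2 t₀) (v p.1 t₀ - v p.2 t₀) : ℝ)
                ≤ Dstar * Dstar := by
              calc (inner ℝ (v k t₀ - v p.2 t₀) (v p.1 t₀ - v p.2 t₀) : ℝ)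
                  ≤ ‖v k t₀ - v p.2 t₀‖ * ‖v p.1 t₀ - v p.2 t₀‖ := real_inner_le_norm _ _
                _ ≤ Dstar * Dstar := by
                    rw [hp]
                    apply mul_le_mul_of_nonneg_right _ (le_of_lt hDstar0)
                    rw [← hstar]
                    exact norm_le_diamAt v t₀ k p.2
            linarith
          have hQk : ∀ k : Fin N,
              0 ≤ (inner ℝ (v k t₀ - v p.2 t₀) (v p.1 t₀ - v p.2 t₀) : ℝ) := by
            intro k
            have hsplit : v k t₀ - v p.2 t₀
                = (v k t₀ - v p.1 t₀) + (v p.1 t₀ - v p.2 t₀) := by abel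
            rw [hsplit, inner_add_left, hWW]
            have h3 := abs_real_inner_le_norm (v k t₀ - v p.1 t₀) (v p.1 t₀ - v p.2 t₀)
            have h4 : ‖v k t₀ - v p.1 t₀‖ * ‖v p.1 t₀ - v p.2 t₀‖ ≤ Dstar * Dstar := by
              rw [hp]
              apply mul_le_mul_of_nonneg_right _ (le_of_lt hDstar0)
              rw [← hstar]
              exact norm_le_diamAt v t₀ k p.1
            have h5 := neg_abs_le (inner ℝ (v k t₀ - v p.1 t₀) (v p.1 t₀ - v p.2 t₀) : ℝ)
            linarith
          have herr : ∀ a k : Fin N,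
              |(inner ℝ (v k (t₀ - τ) - v a (t₀ - τ)) (v p.1 t₀ - v p.2 t₀) : ℝ)
                - (inner ℝ (v k t₀ - v a t₀) (v p.1 t₀ - v p.2 t₀) : ℝ)| ≤ 2 * Ebar * Dstar := by
            intro a k
            rw [← inner_sub_left]
            have h1 := abs_real_inner_le_norm
              ((v k (t₀ - τ) - v a (t₀ - τ)) - (v k t₀ - v a t₀)) (v p.1 t₀ - v p.2 t₀)
            have h2 : ‖(v k (t₀ - τ) - v a (t₀ - τ)) - (v k t₀ - v a t₀)‖ ≤ 2 * Ebar := by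
              have hsplit : (v k (t₀ - τ) - v a (t₀ - τ)) - (v k t₀ - v a t₀)
                  = (v k (t₀ - τ) - v k t₀) - (v a (t₀ - τ) - v a t₀) := by abel
              rw [hsplit]
              calc ‖(v k (t₀ - τ) - v k t₀) - (v a (t₀ - τ) - v a t₀)‖
                  ≤ ‖v k (t₀ - τ) - v k t₀‖ + ‖v a (t₀ - τ) - v a t₀‖ := norm_sub_le _ _
                _ ≤ 2 * Ebar := by
                    have hk1 := hEk k
                    have hk2 := hEk a
                    linarith
            rw [hp] at h1
            have h6 : ‖(v k (t₀ - τ) - v a (t₀ - τ)) - (v k t₀ - v a t₀)‖ * Dstar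
                ≤ 2 * Ebar * Dstar := mul_le_mul_of_nonneg_right h2 (le_of_lt hDstar0)
            linarith
          have hcount : ∀ c : ℝ, ∀ a : Fin N,
              ∑ k : Fin N, (if k = a then (0:ℝ) else c) = ((N : ℝ) - 1) * c := by
            intro c a
            have h1 : ∀ k : Fin N, (if k = a then (0:ℝ) else c)
                = c - (if k = a then c else 0) := by
              intro k
              by_cases hk : k = a <;> simp [hk]
            rw [Finset.sum_congr rfl (fun k _ => h1 k), Finset.sum_sub_distrib,
              Finset.sum_const, Finset.card_univ, Fintype.card_fin,
              Finset.sum_ite_eq' Finset.univ a (fun _ => c), if_pos (Finset.mem_univ _),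
              nsmul_eq_mul]
            ring
          have hednn : 0 ≤ 2 * Ebar * Dstar := by positivity
          have hinvnn : (0:ℝ) ≤ 1 / N := by positivity
          -- sum 1 upper bound
          have hsum1 : (inner ℝ (∑ k, (ψ ‖x k (t₀ - τ) - x p.1 (t₀ - τ)‖ / (N : ℝ)) •
                (v k (t₀ - τ) - v p.1 (t₀ - τ))) (v p.1 t₀ - v p.2 t₀) : ℝ)
              ≤ (∑ k, Ψm / N * (inner ℝ (v k t₀ - v p.1 t₀) (v p.1 t₀ - v p.2 t₀) : ℝ))
                + ((N : ℝ) - 1) * (1 / N * (2 * Ebar * Dstar)) := by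
            rw [sum_inner]
            have hterm : ∀ k : Fin N, (inner ℝ ((ψ ‖x k (t₀ - τ) - x p.1 (t₀ - τ)‖ / (N : ℝ)) •
                  (v k (t₀ - τ) - v p.1 (t₀ - τ))) (v p.1 t₀ - v p.2 t₀) : ℝ)
                ≤ Ψm / N * (inner ℝ (v k t₀ - v p.1 t₀) (v p.1 t₀ - v p.2 t₀) : ℝ)
                  + (if k = p.1 then 0 else 1 / N * (2 * Ebar * Dstar)) := by
              intro k
              rw [real_inner_smul_left]
              by_cases hk : k = p.1
              · subst hk
                simp [sub_self]
              · rw [if_neg hk]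
                exact mul_le_aux (hcoefL p.1 k) (hcoefU p.1 k) (hcoef0 p.1 k)
                  (hPk k) (herr p.1 k) hinvnn
            calc ∑ k, (inner ℝ ((ψ ‖x k (t₀ - τ) - x p.1 (t₀ - τ)‖ / (N : ℝ)) •
                  (v k (t₀ - τ) - v p.1 (t₀ - τ))) (v p.1 t₀ - v p.2 t₀) : ℝ)
                ≤ ∑ k, (Ψm / N * (inner ℝ (v k t₀ - v p.1 t₀) (v p.1 t₀ - v p.2 t₀) : ℝ)
                  + (if k = p.1 then 0 else 1 / N * (2 * Ebar * Dstar))) :=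
                  Finset.sum_le_sum (fun k _ => hterm k)
              _ = (∑ k, Ψm / N * (inner ℝ (v k t₀ - v p.1 t₀) (v p.1 t₀ - v p.2 t₀) : ℝ))
                  + ((N : ℝ) - 1) * (1 / N * (2 * Ebar * Dstar)) := by
                  rw [Finset.sum_add_distrib, hcount _ p.1]
          -- sum 2 lower bound
          have hsum2 : (∑ k, Ψm / N * (inner ℝ (v k t₀ - v p.2 t₀) (v p.1 t₀ - v p.2 t₀) : ℝ))
                - ((N : ℝ) - 1) * (1 / N * (2 * Ebar * Dstar))
              ≤ (inner ℝ (∑ k, (ψ ‖x k (t₀ - τ) - x p.2 (t₀ - τ)‖ / (N : ℝ)) •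
                (v k (t₀ - τ) - v p.2 (t₀ - τ))) (v p.1 t₀ - v p.2 t₀) : ℝ) := by
            rw [sum_inner]
            have hterm : ∀ k : Fin N,
                Ψm / N * (inner ℝ (v k t₀ - v p.2 t₀) (v p.1 t₀ - v p.2 t₀) : ℝ)
                  - (if k = p.2 then 0 else 1 / N * (2 * Ebar * Dstar))
                ≤ (inner ℝ ((ψ ‖x k (t₀ - τ) - x p.2 (t₀ - τ)‖ / (N : ℝ)) •
                  (v k (t₀ - τ) - v p.2 (t₀ - τ))) (v p.1 t₀ - v p.2 t₀) : ℝ) := by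
              intro k
              rw [real_inner_smul_left]
              by_cases hk : k = p.2
              · subst hk
                simp [sub_self]
              · rw [if_neg hk]
                exact mul_ge_aux (hcoefL p.2 k) (hcoefU p.2 k) (hcoef0 p.2 k)
                  (hQk k) (herr p.2 k) hinvnn
            calc (∑ k, Ψm / N * (inner ℝ (v k t₀ - v p.2 t₀) (v p.1 t₀ - v p.2 t₀) : ℝ))
                  - ((N : ℝ) - 1) * (1 / N * (2 * Ebar * Dstar))
                = ∑ k, (Ψm / N * (inner ℝ (v k t₀ - v p.2 t₀) (v p.1 t₀ - v p.2 t₀) : ℝ)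
                  - (if k = p.2 then 0 else 1 / N * (2 * Ebar * Dstar))) := by
                  rw [Finset.sum_sub_distrib, hcount _ p.2]
              _ ≤ ∑ k, (inner ℝ ((ψ ‖x k (t₀ - τ) - x p.2 (t₀ - τ)‖ / (N : ℝ)) •
                  (v k (t₀ - τ) - v p.2 (t₀ - τ))) (v p.1 t₀ - v p.2 t₀) : ℝ) :=
                  Finset.sum_le_sum (fun k _ => hterm k)
          -- sum of P-Q differences
          have hPQsum : (∑ k, Ψm / N * (inner ℝ (v k t₀ - v p.1 t₀) (v p.1 t₀ - v p.2 t₀) : ℝ))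
              - (∑ k, Ψm / N * (inner ℝ (v k t₀ - v p.2 t₀) (v p.1 t₀ - v p.2 t₀) : ℝ))
              = -(Ψm * (Dstar * Dstar)) := by
            rw [← Finset.sum_sub_distrib]
            have h1 : ∀ k : Fin N,
                Ψm / N * (inner ℝ (v k t₀ - v p.1 t₀) (v p.1 t₀ - v p.2 t₀) : ℝ)
                - Ψm / N * (inner ℝ (v k t₀ - v p.2 t₀) (v p.1 t₀ - v p.2 t₀) : ℝ)
                = Ψm / N * -(Dstar * Dstar) := by
              intro k
              rw [← mul_sub, ← inner_sub_left]
              have hsplit : (v k t₀ - v p.1 t₀) - (v k t₀ - v p.2 t₀)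
                  = -(v p.1 t₀ - v p.2 t₀) := by abel
              rw [hsplit, inner_neg_left, hWW]
            rw [Finset.sum_congr rfl (fun k _ => h1 k), Finset.sum_const, Finset.card_univ,
              Fintype.card_fin, nsmul_eq_mul]
            field_simp
          -- final combination
          rw [inner_sub_left, hp, div_le_iff₀ hDstar0]
          have hLD : L * Dstar = -(Ψm * (Dstar * Dstar))
              + ((N : ℝ) - 1) / N * (4 * Ebar) * Dstar := by
            rw [hLdef]
            linear_combination (-(((N : ℝ) - 1) / N * Dstar)) * hEθ
          rw [hLD]
          have e5 : 2 * (((N : ℝ) - 1) * (1 / N * (2 * Ebar * Dstar)))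
              = ((N : ℝ) - 1) / N * (4 * Ebar) * Dstar := by
            field_simp
            ring
          linarith
        have hslope := hasDerivAt_iff_tendsto_slope.mp hnorm'
        have hmono : nhdsWithin t₀ (Ioi t₀) ≤ nhdsWithin t₀ {t₀}ᶜ :=
          nhdsWithin_mono t₀ (fun z hz => mem_compl_singleton_iff.mpr (ne_of_gt hz))
        have hev := Filter.Tendsto.eventually_lt_const (lt_of_le_of_lt hLp hrL)
          (hslope.mono_left hmono)
        filter_upwards [hev] with z hz
        rw [slope_def_field] at hz
        rw [← hp]
        exact hz
      · -- inactive pair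
        have hlt : ‖v p.1 t₀ - v p.2 t₀‖ < Dstar :=
          lt_of_le_of_ne (by rw [← hstar]; exact norm_le_diamAt v t₀ p.1 p.2) hp
        have hnum : Tendsto (fun z => ‖v p.1 z - v p.2 z‖ - Dstar) (nhdsWithin t₀ (Ioi t₀))
            (nhds (‖v p.1 t₀ - v p.2 t₀‖ - Dstar)) := by
          have hc1 : ContinuousAt (fun z => ‖v p.1 z - v p.2 z‖) t₀ :=
            (((hvc p.1).continuousAt (Ici_mem_nhds (by linarith))).sub
              ((hvc p.2).continuousAt (Ici_mem_nhds (by linarith)))).norm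
          exact (hc1.sub continuousAt_const).tendsto.mono_left nhdsWithin_le_nhds
        have hden : Tendsto (fun z : ℝ => (z - t₀)⁻¹) (nhdsWithin t₀ (Ioi t₀)) atTop := by
          have h1 : Tendsto (fun z : ℝ => z - t₀) (nhdsWithin t₀ (Ioi t₀))
              (nhdsWithin 0 (Ioi 0)) := by
            apply tendsto_nhdsWithin_of_tendsto_nhds_of_eventually_within
            · have h2 := (continuous_id.sub (continuous_const (y := t₀))).tendsto t₀
              replace h2 : Tendsto (fun z : ℝ => z - t₀) (nhds t₀) (nhds 0) :=
                (continuous_sub_right t₀).tendsto' t₀ 0 (sub_self t₀)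
              exact h2.mono_left nhdsWithin_le_nhds
            · filter_upwards [self_mem_nhdsWithin] with z hz
              simpa [sub_pos] using hz
          exact tendsto_inv_nhdsGT_zero.comp h1
        have hprod : Tendsto (fun z => (‖v p.1 z - v p.2 z‖ - Dstar) * (z - t₀)⁻¹)
            (nhdsWithin t₀ (Ioi t₀)) atBot :=
          Filter.Tendsto.neg_mul_atTop (by linarith) hnum hden
        filter_upwards [hprod.eventually (eventually_lt_atBot r)] with z hz
        rw [div_eq_mul_inv]
        exact hz
    have hall : ∀ᶠ z in nhdsWithin t₀ (Ioi t₀), (diamAt v z - Dstar) / (z - t₀) < r := by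
      filter_upwards [eventually_all.mpr claim] with z hz
      obtain ⟨q, hq⟩ := exists_diamAt v z
      rw [hq]
      exact hz q
    have hBderiv : Tendsto (fun z => (M * exp (-C * z) - Dstar) / (z - t₀))
        (nhdsWithin t₀ (Ioi t₀)) (nhds B') := by
      have hBd : HasDerivAt (fun z : ℝ => M * exp (-C * z)) (M * (exp (-C * t₀) * -C)) t₀ := by
        have h1 : HasDerivAt (fun z : ℝ => -C * z) (-C) t₀ := by
          simpa using (hasDerivAt_id t₀).const_mul (-C)
        exact h1.exp.const_mul M
      have h2 := hasDerivAt_iff_tendsto_slope.mp hBd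
      have hmono : nhdsWithin t₀ (Ioi t₀) ≤ nhdsWithin t₀ {t₀}ᶜ :=
        nhdsWithin_mono t₀ (fun z hz => mem_compl_singleton_iff.mpr (ne_of_gt hz))
      have h3 : B' = M * (exp (-C * t₀) * -C) := by
        rw [hB'def, hDstardef]
        ring
      rw [h3]
      have h4 := h2.mono_left hmono
      have h5 : ∀ z : ℝ, slope (fun z : ℝ => M * exp (-C * z)) t₀ z
          = (M * exp (-C * z) - Dstar) / (z - t₀) := by
        intro z
        rw [slope_def_field, hDstardef]
      exact h4.congr h5
    have hsq' : Tendsto sq atTop (nhdsWithin t₀ (Ioi t₀)) :=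
      tendsto_nhdsWithin_of_tendsto_nhds_of_eventually_within sq halim
        (Filter.Eventually.of_forall fun n => hsqgt n)
    have h1 := hsq'.eventually hall
    have h2 := hsq'.eventually (Filter.Tendsto.eventually_const_lt hrB hBderiv)
    obtain ⟨n, hn1, hn2⟩ := (h1.and h2).exists
    have h3 : (M * exp (-C * sq n) - Dstar) / (sq n - t₀)
        < (diamAt v (sq n) - Dstar) / (sq n - t₀) := by
      have hden : 0 < sq n - t₀ := by
        have := hsqgt n
        linarith
      have hnum : M * exp (-C * sq n) - Dstar < diamAt v (sq n) - Dstar := by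
        have := (hsqA n).2
        linarith
      gcongr
    linarith
  -- choose σ and conclude the sharp bound
  have key : ∀ t, 0 ≤ t → diamAt v t ≤ dv0 * exp (-C * t) := by
    have hMfun : Tendsto (fun σ : ℝ => (dv0 + σ) * exp (C * σ)) (nhds 0) (nhds dv0) := by
      have hct : ContinuousAt (fun σ : ℝ => (dv0 + σ) * exp (C * σ)) 0 := by fun_prop
      have h0 : (dv0 + 0) * exp (C * 0) = dv0 := by simp
      simpa [ContinuousAt, h0] using hct
    have hlt : dv0 < dv0 + C * δ := by nlinarith
    have hev1 : ∀ᶠ σ in nhdsWithin (0:ℝ) (Ioi 0), (dv0 + σ) * exp (C * σ) < dv0 + C * δ :=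
      Filter.Tendsto.eventually_lt_const hlt (hMfun.mono_left nhdsWithin_le_nhds)
    have hbnd : ∀ᶠ σ in nhdsWithin (0:ℝ) (Ioi 0), ∀ t, 0 ≤ t →
        diamAt v t ≤ ((dv0 + σ) * exp (C * σ)) * exp (-C * t) := by
      filter_upwards [hev1, self_mem_nhdsWithin] with σ hσ1 hσ2
      have hσ0 : (0:ℝ) < σ := hσ2
      set M := (dv0 + σ) * exp (C * σ) with hM
      have hexpσ : 1 ≤ exp (C * σ) := by
        rw [← Real.exp_zero]
        exact Real.exp_le_exp.mpr (by positivity)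
      have hMgt : dv0 < M := by nlinarith
      apply main M hMgt
      have hdvC : dv0 / C * C = dv0 := div_mul_cancel₀ _ (ne_of_gt hC0)
      have hRle : R₀ ≤ dx0 + M / C := by
        rw [hR₀def]
        have : dv0 / C ≤ M / C := by gcongr
        linarith
      have hRlt : dx0 + M / C < R₀ + δ := by
        rw [hR₀def]
        have : M / C < dv0 / C + δ := by
          rw [div_lt_iff₀ hC0]
          nlinarith
        linarith
      have h1 := hδ _ hRle hRlt
      have e1 : ((N:ℝ) - 1) / N * θ = θ - θ / N := by
        field_simp
      have e2 : θ / (2 * (N:ℝ)) < θ / N :=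
        div_lt_div_of_pos_left hθpos hNpos (by linarith)
      rw [e1]
      rw [hηdef] at h1
      linarith
    intro t ht
    have hev2 : ∀ᶠ σ in nhdsWithin (0:ℝ) (Ioi 0),
        diamAt v t ≤ ((dv0 + σ) * exp (C * σ)) * exp (-C * t) :=
      hbnd.mono fun σ h => h t ht
    have hlim : Tendsto (fun σ : ℝ => ((dv0 + σ) * exp (C * σ)) * exp (-C * t))
        (nhdsWithin (0:ℝ) (Ioi 0)) (nhds (dv0 * exp (-C * t))) :=
      (hMfun.mono_left nhdsWithin_le_nhds).mul_const _
    exact ge_of_tendsto hlim hev2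
  refine ⟨?_, ?_, key⟩
  · -- bounded positions
    refine ⟨dx0 + dv0 / C, ?_⟩
    rintro _ ⟨t, ht, rfl⟩
    exact diamAt_le x t fun k i => posb dv0 hdv0nn t ht (fun u hu hus => key u hu) k i
  · -- velocity diameter tends to 0
    have h1 : Tendsto (fun t : ℝ => dv0 * exp (-C * t)) atTop (nhds 0) := by
      rw [show (0:ℝ) = dv0 * 0 by ring]
      apply Tendsto.const_mul
      apply Real.tendsto_exp_atBot.comp
      exact Tendsto.const_mul_atTop_of_neg (neg_neg_iff_pos.mpr hC0) tendsto_id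
    apply squeeze_zero' (Filter.Eventually.mono (eventually_ge_atTop 0) fun t ht => diamAt_nonneg v t)
      (Filter.Eventually.mono (eventually_ge_atTop 0) fun t ht => key t ht) h1
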